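/- Fix integers 0 = i₀ < i₁ < ⋯ < i_l = N with l ≥ 1 and set j_k := i_k − i_{k−1}. Let P be the group of real N×N matrices of determinant 1 that are block upper-triangular with respect to the partition (j₁, …, j_l) and whose diagonal blocks p₁, …, p_l all have positive determinant, and let Γ_P := P ∩ SL_N(ℤ). Then: (a) for every γ ∈ Γ_P, each diagonal block γ_k lies in SL_{j_k}(ℤ); (b) the map sending p ∈ P to the pair consisting of the tuple (det p₁, …, det p_l) ∈ (ℝ_{>0})^l and the tuple of cosets ((det p_k)^{-1/j_k}·p_k · SL_{j_k}(ℤ))_{k=1}^{l} in ∏_{k=1}^{l} SL_{j_k}(ℝ)/SL_{j_k}(ℤ) descends to a well-defined map Φ on the quotient P/Γ_P (with the quotient topology), and Φ is continuous and proper, i.e. the preimage under Φ of every compact set is compact. -/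

import Mathlib

open Matrix

noncomputable section

/-- `p` is block upper-triangular with respect to the partition of `{0, …, N-1}` with
cut points `part 0 < part 1 < ⋯ < part l`: for every cut point the lower-left block
(rows `≥ part k`, columns `< part k`) vanishes. -/
def IsBUT (N l : ℕ) (part : Fin (l + 1) → ℕ) (p : Matrix (Fin N) (Fin N) ℝ) : Prop :=
  ∀ (k : Fin (l + 1)) (r c : Fin N), part k ≤ (r : ℕ) → (c : ℕ) < part k → p r c = 0

/-- The embedding of the index set of the `k`-th diagonal block into `Fin N`. -/
def blockEmb (N l : ℕ) (part : Fin (l + 1) → ℕ) (hmono : StrictMono part)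
    (hlast : part (Fin.last l) = N) (k : Fin l)
    (a : Fin (part k.succ - part k.castSucc)) : Fin N :=
  ⟨part k.castSucc + a, by
    have h1 : part k.castSucc < part k.succ := hmono (Fin.castSucc_lt_succ : k.castSucc < k.succ)
    have h2 : part k.succ ≤ N := by
      rw [← hlast]; exact hmono.monotone (Fin.le_last k.succ)
    have h3 := a.isLt
    omega⟩

/-- The `k`-th diagonal block `p_k` of a matrix (a square block of size
`j_k = part (k+1) - part k` on the diagonal). -/
def dblock (N l : ℕ) (part : Fin (l + 1) → ℕ) (hmono : StrictMono part)
    (hlast : part (Fin.last l) = N) (p : Matrix (Fin N) (Fin N) ℝ) (k : Fin l) :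
    Matrix (Fin (part k.succ - part k.castSucc)) (Fin (part k.succ - part k.castSucc)) ℝ :=
  Matrix.of fun a b => p (blockEmb N l part hmono hlast k a) (blockEmb N l part hmono hlast k b)

/-- The parabolic group `P`: real `N × N` matrices of determinant `1` which are block
upper-triangular for the given partition and whose diagonal blocks have positive
determinant. -/
def Pset (N l : ℕ) (part : Fin (l + 1) → ℕ) (hmono : StrictMono part)
    (hlast : part (Fin.last l) = N) : Set (Matrix (Fin N) (Fin N) ℝ) :=
  {p | p.det = 1 ∧ IsBUT N l part p ∧
    ∀ k : Fin l, 0 < (dblock N l part hmono hlast p k).det}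

/-- The relation of right translation by `Γ_P = P ∩ SL_N(ℤ)` on `P`. -/
def pRel (N l : ℕ) (part : Fin (l + 1) → ℕ) (hmono : StrictMono part)
    (hlast : part (Fin.last l) = N)
    (p q : ↥(Pset N l part hmono hlast)) : Prop :=
  ∃ γ : Matrix (Fin N) (Fin N) ℤ,
    γ.map (Int.cast : ℤ → ℝ) ∈ Pset N l part hmono hlast ∧
    (q : Matrix (Fin N) (Fin N) ℝ) =
      (p : Matrix (Fin N) (Fin N) ℝ) * γ.map (Int.cast : ℤ → ℝ)

/-- The quotient `P/Γ_P`, with the quotient topology. -/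
abbrev PQuot (N l : ℕ) (part : Fin (l + 1) → ℕ) (hmono : StrictMono part)
    (hlast : part (Fin.last l) = N) :=
  Quot (pRel N l part hmono hlast)

/-- The subgroup `SL_m(ℤ)` of `SL_m(ℝ)`, as the range of the coefficient map. -/
def SLZ (m : ℕ) : Subgroup (Matrix.SpecialLinearGroup (Fin m) ℝ) :=
  MonoidHom.range
    (Matrix.SpecialLinearGroup.map (Int.castRingHom ℝ) :
      Matrix.SpecialLinearGroup (Fin m) ℤ →* Matrix.SpecialLinearGroup (Fin m) ℝ)

instance (m : ℕ) : TopologicalSpace (Matrix.SpecialLinearGroup (Fin m) ℝ) :=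
  inferInstanceAs (TopologicalSpace {A : Matrix (Fin m) (Fin m) ℝ // A.det = 1})

lemma dblock_det_pos (N l : ℕ) (part : Fin (l + 1) → ℕ) (hmono : StrictMono part)
    (hlast : part (Fin.last l) = N) (p : ↥(Pset N l part hmono hlast)) (k : Fin l) :
    0 < (dblock N l part hmono hlast (p : Matrix (Fin N) (Fin N) ℝ) k).det :=
  p.2.2.2 k

/-- The normalized diagonal block `(det p_k)^{-1/j_k} • p_k`, an element of
`SL_{j_k}(ℝ)`. -/
def nblock (N l : ℕ) (part : Fin (l + 1) → ℕ) (hmono : StrictMono part)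
    (hlast : part (Fin.last l) = N) (p : ↥(Pset N l part hmono hlast)) (k : Fin l) :
    Matrix.SpecialLinearGroup (Fin (part k.succ - part k.castSucc)) ℝ :=
  ⟨((dblock N l part hmono hlast (p : Matrix (Fin N) (Fin N) ℝ) k).det ^
      (-(1 : ℝ) / ((part k.succ - part k.castSucc : ℕ) : ℝ))) •
      dblock N l part hmono hlast (p : Matrix (Fin N) (Fin N) ℝ) k, by
    have hpos := dblock_det_pos N l part hmono hlast p k
    have hm : 0 < part k.succ - part k.castSucc := by
      have h1 : part k.castSucc < part k.succ := hmono (Fin.castSucc_lt_succ : k.castSucc < k.succ)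
      omega
    have hm' : ((part k.succ - part k.castSucc : ℕ) : ℝ) ≠ 0 :=
      Nat.cast_ne_zero.mpr hm.ne'
    set d := (dblock N l part hmono hlast (p : Matrix (Fin N) (Fin N) ℝ) k).det with hd
    rw [Matrix.det_smul, Fintype.card_fin, ← hd]
    rw [← Real.rpow_natCast
      (d ^ (-(1 : ℝ) / ((part k.succ - part k.castSucc : ℕ) : ℝ)))
      (part k.succ - part k.castSucc)]
    rw [← Real.rpow_mul hpos.le]
    have he : (-(1 : ℝ) / ((part k.succ - part k.castSucc : ℕ) : ℝ)) *
        ((part k.succ - part k.castSucc : ℕ) : ℝ) = -1 := by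
      field_simp
    rw [he, Real.rpow_neg_one]
    exact inv_mul_cancel₀ hpos.ne'⟩

/-- The target of the map `Φ`: the tuple of block determinants in `(ℝ_{>0})^l` and the
tuple of cosets of normalized blocks in `∏ₖ SL_{j_k}(ℝ)/SL_{j_k}(ℤ)`. -/
abbrev ParabolicTarget (l : ℕ) (part : Fin (l + 1) → ℕ) :=
  (Fin l → {x : ℝ // 0 < x}) ×
    ((k : Fin l) →
      Matrix.SpecialLinearGroup (Fin (part k.succ - part k.castSucc)) ℝ ⧸
        SLZ (part k.succ - part k.castSucc))

section Par14

variable {N l : ℕ} {part : Fin (l + 1) → ℕ}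

lemma part_mono_nat (hmono : StrictMono part) {a b : Fin (l + 1)} (h : (a : ℕ) ≤ (b : ℕ)) :
    part a ≤ part b :=
  hmono.monotone (by exact_mod_cast h)

lemma part_strict_nat (hmono : StrictMono part) {a b : Fin (l + 1)} (h : (a : ℕ) < (b : ℕ)) :
    part a < part b :=
  hmono (by exact_mod_cast h)

lemma jpos (hmono : StrictMono part) (k : Fin l) :
    0 < part k.succ - part k.castSucc := by
  have := hmono (Fin.castSucc_lt_succ : k.castSucc < k.succ)
  omega

lemma exists_bIdx (hlast : part (Fin.last l) = N) (h0 : part 0 = 0) (i : Fin N) :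
    ∃ k : Fin l, part k.castSucc ≤ (i : ℕ) ∧ (i : ℕ) < part k.succ := by
  classical
  set S : Finset (Fin (l + 1)) := Finset.univ.filter fun k => part k ≤ (i : ℕ) with hS
  have h0S : (0 : Fin (l + 1)) ∈ S := by simp [hS, h0]
  have hSne : S.Nonempty := ⟨0, h0S⟩
  set k0 := S.max' hSne with hk0
  have hk0S : k0 ∈ S := S.max'_mem hSne
  have hk0le : part k0 ≤ (i : ℕ) := by
    have := hk0S; rw [hS] at this; simpa using this
  have hk0lt : (k0 : ℕ) < l := by
    by_contra h
    push_neg at h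
    have hk0eq : k0 = Fin.last l := by
      apply Fin.ext; have := k0.isLt; simp only [Fin.val_last]; omega
    rw [hk0eq, hlast] at hk0le
    exact absurd i.isLt (by omega)
  refine ⟨⟨(k0 : ℕ), hk0lt⟩, ?_, ?_⟩
  · have he : ((⟨(k0 : ℕ), hk0lt⟩ : Fin l).castSucc) = k0 := by apply Fin.ext; simp
    rw [he]; exact hk0le
  · by_contra h
    push_neg at h
    have hmem : ((⟨(k0 : ℕ), hk0lt⟩ : Fin l).succ) ∈ S := by
      rw [hS]; simp only [Finset.mem_filter, Finset.mem_univ, true_and]; exact h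
    have hle := S.le_max' _ hmem
    rw [← hk0] at hle
    have : ((⟨(k0 : ℕ), hk0lt⟩ : Fin l).succ : ℕ) ≤ (k0 : ℕ) := hle
    simp [Fin.val_succ] at this

/-- The index of the block containing `i`. -/
def bIdx (hlast : part (Fin.last l) = N) (h0 : part 0 = 0) (i : Fin N) : Fin l :=
  (exists_bIdx hlast h0 i).choose

lemma bIdx_le (hlast : part (Fin.last l) = N) (h0 : part 0 = 0) (i : Fin N) :
    part (bIdx hlast h0 i).castSucc ≤ (i : ℕ) :=
  (exists_bIdx hlast h0 i).choose_spec.1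

lemma lt_bIdx (hlast : part (Fin.last l) = N) (h0 : part 0 = 0) (i : Fin N) :
    (i : ℕ) < part (bIdx hlast h0 i).succ :=
  (exists_bIdx hlast h0 i).choose_spec.2

lemma bIdx_eq (hmono : StrictMono part) (hlast : part (Fin.last l) = N) (h0 : part 0 = 0)
    {i : Fin N} {k : Fin l} (h1 : part k.castSucc ≤ (i : ℕ)) (h2 : (i : ℕ) < part k.succ) :
    bIdx hlast h0 i = k := by
  set k' := bIdx hlast h0 i with hk'
  have h3 := bIdx_le hlast h0 i
  have h4 := lt_bIdx hlast h0 i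
  rw [← hk'] at h3 h4
  rcases lt_trichotomy (k' : ℕ) (k : ℕ) with h | h | h
  · exfalso
    have : part k'.succ ≤ part k.castSucc := part_mono_nat hmono (by simp [Fin.val_succ]; omega)
    omega
  · exact Fin.ext h
  · exfalso
    have : part k.succ ≤ part k'.castSucc := part_mono_nat hmono (by simp [Fin.val_succ]; omega)
    omega

lemma blockEmb_val (hmono : StrictMono part) (hlast : part (Fin.last l) = N) (k : Fin l)
    (a : Fin (part k.succ - part k.castSucc)) :
    (blockEmb N l part hmono hlast k a : ℕ) = part k.castSucc + a := rfl

lemma bIdx_blockEmb (hmono : StrictMono part) (hlast : part (Fin.last l) = N)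
    (h0 : part 0 = 0) (k : Fin l) (a : Fin (part k.succ - part k.castSucc)) :
    bIdx hlast h0 (blockEmb N l part hmono hlast k a) = k := by
  apply bIdx_eq hmono hlast h0 <;> rw [blockEmb_val]
  · omega
  · have := a.isLt; omega

/-- Local index of `i` within its block. -/
def locIdx (hlast : part (Fin.last l) = N) (h0 : part 0 = 0) (i : Fin N) :
    Fin (part (bIdx hlast h0 i).succ - part (bIdx hlast h0 i).castSucc) :=
  ⟨(i : ℕ) - part (bIdx hlast h0 i).castSucc, by
    have h1 := bIdx_le hlast h0 i
    have h2 := lt_bIdx hlast h0 i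
    omega⟩

lemma blockEmb_locIdx (hmono : StrictMono part) (hlast : part (Fin.last l) = N)
    (h0 : part 0 = 0) (i : Fin N) :
    blockEmb N l part hmono hlast (bIdx hlast h0 i) (locIdx hlast h0 i) = i := by
  apply Fin.ext
  rw [blockEmb_val]
  have h1 := bIdx_le hlast h0 i
  simp only [locIdx]
  omega

lemma sum_blocks (hmono : StrictMono part) (hlast : part (Fin.last l) = N)
    (h0 : part 0 = 0) {M : Type*} [AddCommMonoid M] (f : Fin N → M) :
    ∑ i, f i = ∑ k : Fin l, ∑ a : Fin (part k.succ - part k.castSucc),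
      f (blockEmb N l part hmono hlast k a) := by
  classical
  have hbij : Function.Bijective
      (fun x : Σ k : Fin l, Fin (part k.succ - part k.castSucc) =>
        blockEmb N l part hmono hlast x.1 x.2) := by
    constructor
    · rintro ⟨k, a⟩ ⟨k', a'⟩ h
      simp only at h
      have hk : k = k' := by
        rw [← bIdx_blockEmb hmono hlast h0 k a, h, bIdx_blockEmb hmono hlast h0]
      subst hk
      have : (part k.castSucc + (a : ℕ)) = (part k.castSucc + (a' : ℕ)) := by
        have := congrArg (fun x : Fin N => (x : ℕ)) h
        simpa [blockEmb_val] using this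
      have : (a : ℕ) = (a' : ℕ) := by omega
      simp [Fin.ext this]
    · intro i
      exact ⟨⟨bIdx hlast h0 i, locIdx hlast h0 i⟩, blockEmb_locIdx hmono hlast h0 i⟩
  rw [← Fintype.sum_bijective _ hbij _ f (fun x => rfl)]
  rw [← Finset.univ_sigma_univ, Finset.sum_sigma]

end Par14
section Par14b

variable {N l : ℕ} {part : Fin (l + 1) → ℕ}

/-- Off-diagonal block extraction (over any coefficient type). -/
def oblock {α : Type*} (hmono : StrictMono part) (hlast : part (Fin.last l) = N)
    (p : Matrix (Fin N) (Fin N) α) (k m : Fin l) :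
    Matrix (Fin (part k.succ - part k.castSucc)) (Fin (part m.succ - part m.castSucc)) α :=
  Matrix.of fun a b => p (blockEmb N l part hmono hlast k a) (blockEmb N l part hmono hlast m b)

lemma oblock_diag (hmono : StrictMono part) (hlast : part (Fin.last l) = N)
    (p : Matrix (Fin N) (Fin N) ℝ) (k : Fin l) :
    oblock hmono hlast p k k = dblock N l part hmono hlast p k := rfl

lemma oblock_map {α β : Type*} (hmono : StrictMono part) (hlast : part (Fin.last l) = N)
    (p : Matrix (Fin N) (Fin N) α) (f : α → β) (k m : Fin l) :
    oblock hmono hlast (p.map f) k m = (oblock hmono hlast p k m).map f := rfl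

lemma IsBUT.lower_zero (hmono : StrictMono part) (hlast : part (Fin.last l) = N)
    (h0 : part 0 = 0) {p : Matrix (Fin N) (Fin N) ℝ} (hp : IsBUT N l part p)
    {r c : Fin N} (h : bIdx hlast h0 c < bIdx hlast h0 r) : p r c = 0 := by
  apply hp (bIdx hlast h0 r).castSucc r c (bIdx_le hlast h0 r)
  calc (c : ℕ) < part (bIdx hlast h0 c).succ := lt_bIdx hlast h0 c
    _ ≤ part (bIdx hlast h0 r).castSucc := part_mono_nat hmono (by
        simp only [Fin.val_succ, Fin.coe_castSucc]
        exact h)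

lemma isBUT_of_lower_zero {hmono : StrictMono part} (hlast : part (Fin.last l) = N)
    (h0 : part 0 = 0) {p : Matrix (Fin N) (Fin N) ℝ}
    (hp : ∀ r c : Fin N, bIdx hlast h0 c < bIdx hlast h0 r → p r c = 0) :
    IsBUT N l part p := by
  intro k r c hr hc
  apply hp
  have h1 := lt_bIdx hlast h0 r
  have h2 := bIdx_le hlast h0 c
  -- part k ≤ r < part (bIdx r).succ  so  k ≤ bIdx r ; c's block: part (bIdx c).castSucc ≤ c < part k
  have hk1 : (k : ℕ) ≤ ((bIdx hlast h0 r) : ℕ) := by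
    by_contra hcon
    push_neg at hcon
    have : part (bIdx hlast h0 r).succ ≤ part k :=
      part_mono_nat hmono (by simp only [Fin.val_succ]; omega)
    omega
  have hk2 : ((bIdx hlast h0 c) : ℕ) < (k : ℕ) := by
    by_contra hcon
    push_neg at hcon
    have : part k ≤ part (bIdx hlast h0 c).castSucc :=
      part_mono_nat hmono (by simp only [Fin.coe_castSucc]; omega)
    omega
  exact Fin.lt_def.2 (lt_of_lt_of_le hk2 hk1)

lemma IsBUT.blockTriangular (hmono : StrictMono part) (hlast : part (Fin.last l) = N)
    (h0 : part 0 = 0) {p : Matrix (Fin N) (Fin N) ℝ} (hp : IsBUT N l part p) :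
    p.BlockTriangular (bIdx hlast h0) :=
  fun _ _ h => hp.lower_zero hmono hlast h0 h

lemma oblock_mul {hmono : StrictMono part} (hlast : part (Fin.last l) = N)
    (h0 : part 0 = 0) {p q : Matrix (Fin N) (Fin N) ℝ}
    (hp : IsBUT N l part p) (hq : IsBUT N l part q) (k m : Fin l) :
    oblock hmono hlast (p * q) k m =
      ∑ t ∈ Finset.Icc k m, oblock hmono hlast p k t * oblock hmono hlast q t m := by
  ext a b
  rw [Matrix.sum_apply]
  simp only [oblock, Matrix.of_apply, Matrix.mul_apply]
  rw [sum_blocks hmono hlast h0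
    (fun c => p (blockEmb N l part hmono hlast k a) c * q c (blockEmb N l part hmono hlast m b))]
  rw [← Finset.sum_subset (Finset.subset_univ (Finset.Icc k m))]
  intro t _ ht
  rw [Finset.mem_Icc] at ht
  push_neg at ht
  apply Finset.sum_eq_zero
  intro x _
  rcases lt_or_ge t k with h | h
  · have : p (blockEmb N l part hmono hlast k a) (blockEmb N l part hmono hlast t x) = 0 := by
      apply hp.lower_zero hmono hlast h0
      rw [bIdx_blockEmb hmono hlast h0, bIdx_blockEmb hmono hlast h0]
      exact h
    rw [this, zero_mul]
  · have : q (blockEmb N l part hmono hlast t x) (blockEmb N l part hmono hlast m b) = 0 := by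
      apply hq.lower_zero hmono hlast h0
      rw [bIdx_blockEmb hmono hlast h0, bIdx_blockEmb hmono hlast h0]
      exact ht h
    rw [this, mul_zero]

lemma dblock_mul {hmono : StrictMono part} (hlast : part (Fin.last l) = N)
    (h0 : part 0 = 0) {p q : Matrix (Fin N) (Fin N) ℝ}
    (hp : IsBUT N l part p) (hq : IsBUT N l part q) (k : Fin l) :
    dblock N l part hmono hlast (p * q) k =
      dblock N l part hmono hlast p k * dblock N l part hmono hlast q k := by
  rw [← oblock_diag, oblock_mul hlast h0 hp hq, Finset.Icc_self, Finset.sum_singleton]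
  rfl

lemma IsBUT.mul (hmono : StrictMono part) (hlast : part (Fin.last l) = N)
    (h0 : part 0 = 0) {p q : Matrix (Fin N) (Fin N) ℝ}
    (hp : IsBUT N l part p) (hq : IsBUT N l part q) : IsBUT N l part (p * q) := by
  apply isBUT_of_lower_zero hlast h0 (hmono := hmono)
  intro r c h
  rw [Matrix.mul_apply]
  apply Finset.sum_eq_zero
  intro t _
  rcases lt_or_ge (bIdx hlast h0 t) (bIdx hlast h0 r) with ht | ht
  · rw [hp.lower_zero hmono hlast h0 ht, zero_mul]
  · rw [hq.lower_zero hmono hlast h0 (lt_of_lt_of_le h ht), mul_zero]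

lemma det_eq_prod_dblock {hmono : StrictMono part} (hlast : part (Fin.last l) = N)
    (h0 : part 0 = 0) {p : Matrix (Fin N) (Fin N) ℝ} (hp : IsBUT N l part p) :
    p.det = ∏ k : Fin l, (dblock N l part hmono hlast p k).det := by
  classical
  rw [(hp.blockTriangular hmono hlast h0).det_fintype]
  refine Finset.prod_congr rfl fun k _ => ?_
  have hb := bIdx_le hlast h0
  have hb' := lt_bIdx hlast h0
  set e : Fin (part k.succ - part k.castSucc) ≃ {i : Fin N // bIdx hlast h0 i = k} :=
    { toFun := fun a => ⟨blockEmb N l part hmono hlast k a, bIdx_blockEmb hmono hlast h0 k a⟩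
      invFun := fun x => ⟨(x.1 : ℕ) - part k.castSucc, by
        have h1 := bIdx_le hlast h0 x.1
        have h2 := lt_bIdx hlast h0 x.1
        rw [x.2] at h1 h2
        omega⟩
      left_inv := by
        intro a
        apply Fin.ext
        simp [blockEmb_val]
      right_inv := by
        intro x
        apply Subtype.ext
        apply Fin.ext
        have h1 := bIdx_le hlast h0 x.1
        rw [x.2] at h1
        simp only [blockEmb_val]
        omega } with he
  have : dblock N l part hmono hlast p k = (p.toSquareBlock (bIdx hlast h0) k).submatrix e e := by
    ext a b
    simp [Matrix.toSquareBlock, Matrix.toSquareBlockProp, Matrix.submatrix, dblock, he]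
  rw [this, Matrix.det_submatrix_equiv_self]

end Par14b
section Par14c

variable {N l : ℕ} {part : Fin (l + 1) → ℕ}

lemma Pset_mul (hmono : StrictMono part) (hlast : part (Fin.last l) = N) (h0 : part 0 = 0)
    {p q : Matrix (Fin N) (Fin N) ℝ} (hp : p ∈ Pset N l part hmono hlast)
    (hq : q ∈ Pset N l part hmono hlast) : p * q ∈ Pset N l part hmono hlast := by
  obtain ⟨hp1, hp2, hp3⟩ := hp
  obtain ⟨hq1, hq2, hq3⟩ := hq
  refine ⟨by rw [Matrix.det_mul, hp1, hq1, one_mul], hp2.mul hmono hlast h0 hq2, fun k => ?_⟩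
  rw [dblock_mul hlast h0 hp2 hq2, Matrix.det_mul]
  exact mul_pos (hp3 k) (hq3 k)

lemma entry_eq_oblock (hmono : StrictMono part) (hlast : part (Fin.last l) = N)
    (h0 : part 0 = 0) {α : Type*} (p : Matrix (Fin N) (Fin N) α) (r c : Fin N) :
    p r c = oblock hmono hlast p (bIdx hlast h0 r) (bIdx hlast h0 c)
      (locIdx hlast h0 r) (locIdx hlast h0 c) := by
  simp [oblock, blockEmb_locIdx hmono hlast h0]

lemma partA (hmono : StrictMono part) (hlast : part (Fin.last l) = N) (h0 : part 0 = 0)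
    (γ : Matrix (Fin N) (Fin N) ℤ)
    (hγ : γ.map (Int.cast : ℤ → ℝ) ∈ Pset N l part hmono hlast) (k : Fin l) :
    ∃ δ : Matrix (Fin (part k.succ - part k.castSucc))
        (Fin (part k.succ - part k.castSucc)) ℤ,
      δ.det = 1 ∧
      δ.map (Int.cast : ℤ → ℝ) = dblock N l part hmono hlast (γ.map (Int.cast : ℤ → ℝ)) k := by
  classical
  obtain ⟨h1, h2, h3⟩ := hγ
  refine ⟨oblock hmono hlast γ k k, ?_, rfl⟩
  set d : Fin l → ℤ := fun k => (oblock hmono hlast γ k k).det with hd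
  have hcast : ∀ k : Fin l, ((d k : ℤ) : ℝ) =
      (dblock N l part hmono hlast (γ.map (Int.cast : ℤ → ℝ)) k).det := by
    intro k
    have := (Int.castRingHom ℝ).map_det (oblock hmono hlast γ k k)
    exact (by simpa using this : ((oblock hmono hlast γ k k).det : ℝ) =
      ((oblock hmono hlast γ k k).map (Int.cast : ℤ → ℝ)).det)
  have hpos : ∀ k : Fin l, 1 ≤ d k := by
    intro k
    have hk := h3 k
    rw [← hcast k] at hk
    exact_mod_cast hk
  have hprod : ∏ k, d k = 1 := by
    have hr : ((∏ k, d k : ℤ) : ℝ) = 1 := by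
      push_cast
      calc (∏ k, ((d k : ℤ) : ℝ))
          = ∏ k, (dblock N l part hmono hlast (γ.map (Int.cast : ℤ → ℝ)) k).det :=
            Finset.prod_congr rfl fun k _ => hcast k
        _ = (γ.map (Int.cast : ℤ → ℝ)).det := (det_eq_prod_dblock hlast h0 h2).symm
        _ = 1 := h1
    exact_mod_cast hr
  have hunit : IsUnit (d k) := isUnit_of_dvd_one (by
    rw [← hprod]; exact Finset.dvd_prod_of_mem d (Finset.mem_univ k))
  rcases Int.isUnit_iff.1 hunit with h | h
  · exact h
  · have := hpos k; omega

/-- Assemble a global matrix from a family of blocks. -/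
def assemble {α : Type*} (hmono : StrictMono part) (hlast : part (Fin.last l) = N)
    (h0 : part 0 = 0)
    (X : ∀ k m : Fin l,
      Matrix (Fin (part k.succ - part k.castSucc)) (Fin (part m.succ - part m.castSucc)) α) :
    Matrix (Fin N) (Fin N) α :=
  Matrix.of fun r c =>
    X (bIdx hlast h0 r) (bIdx hlast h0 c) (locIdx hlast h0 r) (locIdx hlast h0 c)

lemma Xcongr {α : Type*}
    (X : ∀ k m : Fin l,
      Matrix (Fin (part k.succ - part k.castSucc)) (Fin (part m.succ - part m.castSucc)) α)
    {k k' m m' : Fin l} (hk : k = k') (hm : m = m')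
    {a : Fin (part k.succ - part k.castSucc)} {a' : Fin (part k'.succ - part k'.castSucc)}
    {b : Fin (part m.succ - part m.castSucc)} {b' : Fin (part m'.succ - part m'.castSucc)}
    (ha : (a : ℕ) = (a' : ℕ)) (hb : (b : ℕ) = (b' : ℕ)) :
    X k m a b = X k' m' a' b' := by
  subst hk; subst hm
  rw [Fin.ext ha, Fin.ext hb]

lemma locIdx_blockEmb_val (hmono : StrictMono part) (hlast : part (Fin.last l) = N)
    (h0 : part 0 = 0) (k : Fin l) (a : Fin (part k.succ - part k.castSucc)) :
    ((locIdx hlast h0 (blockEmb N l part hmono hlast k a)) : ℕ) = (a : ℕ) := by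
  simp only [locIdx, blockEmb_val, bIdx_blockEmb hmono hlast h0]
  omega

lemma oblock_assemble {α : Type*} (hmono : StrictMono part) (hlast : part (Fin.last l) = N)
    (h0 : part 0 = 0)
    (X : ∀ k m : Fin l,
      Matrix (Fin (part k.succ - part k.castSucc)) (Fin (part m.succ - part m.castSucc)) α)
    (k m : Fin l) :
    oblock hmono hlast (assemble hmono hlast h0 X) k m = X k m := by
  ext a b
  simp only [oblock, assemble, Matrix.of_apply]
  exact Xcongr X (bIdx_blockEmb hmono hlast h0 k a) (bIdx_blockEmb hmono hlast h0 m b)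
    (locIdx_blockEmb_val hmono hlast h0 k a) (locIdx_blockEmb_val hmono hlast h0 m b)

/-- The recursively defined integral reduction blocks. -/
def redX {l' : ℕ} {j : Fin l' → ℕ} (P : ∀ k m : Fin l', Matrix (Fin (j k)) (Fin (j m)) ℝ) :
    ∀ k m : Fin l', Matrix (Fin (j k)) (Fin (j m)) ℤ := fun k m =>
  if h : k < m then
    Matrix.of fun a b =>
      -round (((P k k)⁻¹ *
        (P k m + ∑ t ∈ (Finset.Ioo k m).attach,
          P k t.1 * (redX P t.1 m).map (Int.cast : ℤ → ℝ))) a b)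
  else 0
termination_by k m => (m : ℕ) - (k : ℕ)
decreasing_by
  have h2 := Finset.mem_Ioo.1 t.2
  have h3 : (k : ℕ) < (t.1 : ℕ) := h2.1
  have h4 : ((t.1 : Fin l') : ℕ) < (m : ℕ) := h2.2
  omega

lemma redX_eq {l' : ℕ} {j : Fin l' → ℕ} (P : ∀ k m : Fin l', Matrix (Fin (j k)) (Fin (j m)) ℝ)
    {k m : Fin l'} (h : k < m) :
    redX P k m = Matrix.of fun a b =>
      -round (((P k k)⁻¹ *
        (P k m + ∑ t ∈ Finset.Ioo k m,
          P k t * (redX P t m).map (Int.cast : ℤ → ℝ))) a b) := by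
  rw [redX, dif_pos h]
  congr 2
  rw [← Finset.sum_attach (Finset.Ioo k m) (fun t => P k t * (redX P t m).map (Int.cast : ℤ → ℝ))]

lemma redX_zero {l' : ℕ} {j : Fin l' → ℕ} (P : ∀ k m : Fin l', Matrix (Fin (j k)) (Fin (j m)) ℝ)
    {k m : Fin l'} (h : ¬k < m) : redX P k m = 0 := by
  rw [redX, dif_neg h]

end Par14c
section Par14Top

open Matrix

/-- Coordinate projection from `SL` to matrices is continuous. -/
lemma continuous_SL_val (m : ℕ) :
    Continuous (fun A : Matrix.SpecialLinearGroup (Fin m) ℝ =>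
      (A : Matrix (Fin m) (Fin m) ℝ)) :=
  continuous_subtype_val

instance SLtopGroup (m : ℕ) : IsTopologicalGroup (Matrix.SpecialLinearGroup (Fin m) ℝ) where
  continuous_mul := by
    apply Continuous.subtype_mk
      (f := fun p : Matrix.SpecialLinearGroup (Fin m) ℝ × Matrix.SpecialLinearGroup (Fin m) ℝ =>
        ((p.1 : Matrix (Fin m) (Fin m) ℝ) * (p.2 : Matrix (Fin m) (Fin m) ℝ)))
    exact ((continuous_SL_val m).comp continuous_fst).matrix_mul
      ((continuous_SL_val m).comp continuous_snd)
  continuous_inv := by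
    have h : ∀ A : Matrix.SpecialLinearGroup (Fin m) ℝ,
        ((A⁻¹ : Matrix.SpecialLinearGroup (Fin m) ℝ) : Matrix (Fin m) (Fin m) ℝ) =
          (A : Matrix (Fin m) (Fin m) ℝ).adjugate := fun A => rfl
    apply Continuous.subtype_mk
      (f := fun A : Matrix.SpecialLinearGroup (Fin m) ℝ =>
        (A : Matrix (Fin m) (Fin m) ℝ).adjugate)
    exact (continuous_SL_val m).matrix_adjugate

lemma SLZ_closed (m : ℕ) : IsClosed ((SLZ m : Set (Matrix.SpecialLinearGroup (Fin m) ℝ))) := by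
  have hset : (SLZ m : Set (Matrix.SpecialLinearGroup (Fin m) ℝ)) =
      ⋂ (i : Fin m) (j : Fin m),
        {A : Matrix.SpecialLinearGroup (Fin m) ℝ |
          (A : Matrix (Fin m) (Fin m) ℝ) i j ∈ Set.range ((↑) : ℤ → ℝ)} := by
    ext A
    simp only [Set.mem_iInter, Set.mem_setOf_eq]
    constructor
    · rintro ⟨B, rfl⟩ i j
      exact ⟨B.1 i j, rfl⟩
    · intro h
      choose f hf using fun i j => h i j
      have hdet : (Matrix.of f).det = 1 := by
        have : ((Matrix.of f).det : ℝ) = 1 := by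
          have hmap : (Matrix.of f).map ((↑) : ℤ → ℝ) = (A : Matrix (Fin m) (Fin m) ℝ) := by
            ext i j
            exact hf i j
          have := (Int.castRingHom ℝ).map_det (Matrix.of f)
          simp only [Int.coe_castRingHom, RingHom.mapMatrix_apply] at this
          rw [this, hmap, A.2]
        exact_mod_cast this
      refine ⟨⟨Matrix.of f, hdet⟩, ?_⟩
      apply Subtype.ext
      ext i j
      exact hf i j
  rw [hset]
  refine isClosed_iInter fun i => isClosed_iInter fun j => ?_
  exact IsClosed.preimage ((continuous_SL_val m).matrix_elem i j)
    Int.isClosedEmbedding_coe_real.isClosed_range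

/-- Hausdorffness of `G ⧸ H` for a closed subgroup `H`. -/
lemma t2_quotient_of_closed {G : Type*} [Group G] [TopologicalSpace G] [IsTopologicalGroup G]
    (H : Subgroup G) (hH : IsClosed (H : Set G)) : T2Space (G ⧸ H) := by
  constructor
  intro x y hxy
  obtain ⟨a, rfl⟩ := QuotientGroup.mk_surjective x
  obtain ⟨b, rfl⟩ := QuotientGroup.mk_surjective y
  have hab : a⁻¹ * b ∉ H := by
    intro h
    exact hxy (QuotientGroup.eq.2 h)
  have hcont : Continuous fun w : G × G => w.1⁻¹ * (a⁻¹ * b) * w.2 := by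
    continuity
  have hopen : IsOpen ((fun w : G × G => w.1⁻¹ * (a⁻¹ * b) * w.2) ⁻¹' ((H : Set G)ᶜ)) :=
    hH.isOpen_compl.preimage hcont
  have hmem : ((1 : G), (1 : G)) ∈
      ((fun w : G × G => w.1⁻¹ * (a⁻¹ * b) * w.2) ⁻¹' ((H : Set G)ᶜ)) := by
    simpa using hab
  obtain ⟨U, V, hU, hV, hUmem, hVmem, hUV⟩ := isOpen_prod_iff.1 hopen 1 1 hmem
  refine ⟨QuotientGroup.mk '' ((fun g => a * g) '' U),
      QuotientGroup.mk '' ((fun g => b * g) '' V), ?_, ?_, ?_, ?_, ?_⟩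
  · exact QuotientGroup.isOpenMap_coe _ ((Homeomorph.mulLeft a).isOpenMap U hU)
  · exact QuotientGroup.isOpenMap_coe _ ((Homeomorph.mulLeft b).isOpenMap V hV)
  · exact ⟨a * 1, ⟨1, hUmem, rfl⟩, by simp⟩
  · exact ⟨b * 1, ⟨1, hVmem, rfl⟩, by simp⟩
  · rw [Set.disjoint_left]
    rintro z ⟨w, ⟨u, hu, rfl⟩, rfl⟩ ⟨w', ⟨v, hv, rfl⟩, hz⟩
    have : (a * u)⁻¹ * (b * v) ∈ H := QuotientGroup.eq.1 hz.symm
    have hcontra := hUV (Set.mk_mem_prod hu hv)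
    simp only [Set.mem_compl_iff, Set.mem_preimage, SetLike.mem_coe] at hcontra
    apply hcontra
    have : u⁻¹ * (a⁻¹ * b) * v = (a * u)⁻¹ * (b * v) := by group
    rw [this]
    exact ‹(a * u)⁻¹ * (b * v) ∈ H›

instance SLQuotT2 (m : ℕ) :
    T2Space (Matrix.SpecialLinearGroup (Fin m) ℝ ⧸ SLZ m) :=
  t2_quotient_of_closed (SLZ m) (SLZ_closed m)

instance SLlocallyCompact (m : ℕ) :
    LocallyCompactSpace (Matrix.SpecialLinearGroup (Fin m) ℝ) := by
  have hclosed : IsClosed {A : Matrix (Fin m) (Fin m) ℝ | A.det = 1} :=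
    IsClosed.preimage (continuous_id.matrix_det) isClosed_singleton
  have : LocallyCompactSpace (Matrix (Fin m) (Fin m) ℝ) :=
    inferInstanceAs (LocallyCompactSpace (Fin m → Fin m → ℝ))
  exact hclosed.locallyCompactSpace

/-- Compact sets in the quotient of a locally compact group lift to compact sets. -/
lemma exists_compact_lift {G : Type*} [Group G] [TopologicalSpace G] [IsTopologicalGroup G]
    [LocallyCompactSpace G] (H : Subgroup G) {Q : Set (G ⧸ H)} (hQ : IsCompact Q) :
    ∃ L : Set G, IsCompact L ∧ Q ⊆ (QuotientGroup.mk : G → G ⧸ H) '' L := by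
  classical
  set π : G → G ⧸ H := QuotientGroup.mk with hπ
  have hrep : ∀ x : G ⧸ H, ∃ g : G, π g = x := QuotientGroup.mk_surjective
  choose g hg using hrep
  have hK : ∀ x : G ⧸ H, ∃ Kx : Set G, IsCompact Kx ∧ Kx ∈ nhds (g x) := fun x =>
    exists_compact_mem_nhds (g x)
  choose Kx hKc hKn using hK
  have hU : ∀ x ∈ Q, π '' interior (Kx x) ∈ nhds x := by
    intro x _
    have hxin : g x ∈ interior (Kx x) := mem_interior_iff_mem_nhds.2 (hKn x)
    have hopen : IsOpen (π '' interior (Kx x)) :=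
      QuotientGroup.isOpenMap_coe _ isOpen_interior
    have hx : x ∈ π '' interior (Kx x) := ⟨g x, hxin, hg x⟩
    exact hopen.mem_nhds hx
  obtain ⟨t, _, ht⟩ := hQ.elim_nhds_subcover (fun x => π '' interior (Kx x)) hU
  refine ⟨⋃ x ∈ t, Kx x, t.isCompact_biUnion fun x _ => hKc x, ?_⟩
  intro z hz
  obtain ⟨x, hxt, w, hw, rfl⟩ := by
    have := ht hz
    simpa using this
  exact ⟨w, Set.mem_biUnion hxt (interior_subset hw), rfl⟩

end Par14Top
section Par14Phi

open Matrix

variable {N l : ℕ} {part : Fin (l + 1) → ℕ}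

/-- The unquotiented map. -/
def phi (hmono : StrictMono part) (hlast : part (Fin.last l) = N)
    (p : ↥(Pset N l part hmono hlast)) : ParabolicTarget l part :=
  (fun k => ⟨(dblock N l part hmono hlast (p : Matrix (Fin N) (Fin N) ℝ) k).det,
      dblock_det_pos N l part hmono hlast p k⟩,
   fun k => QuotientGroup.mk (nblock N l part hmono hlast p k))

lemma phi_invariant (hmono : StrictMono part) (hlast : part (Fin.last l) = N)
    (h0 : part 0 = 0) (p q : ↥(Pset N l part hmono hlast))
    (hpq : pRel N l part hmono hlast p q) :
    phi hmono hlast p = phi hmono hlast q := by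
  classical
  obtain ⟨γ, hγ, heq⟩ := hpq
  have hpBUT : IsBUT N l part (p : Matrix (Fin N) (Fin N) ℝ) := p.2.2.1
  have hγBUT : IsBUT N l part (γ.map (Int.cast : ℤ → ℝ)) := hγ.2.1
  have hdb : ∀ k : Fin l, dblock N l part hmono hlast (q : Matrix (Fin N) (Fin N) ℝ) k =
      dblock N l part hmono hlast (p : Matrix (Fin N) (Fin N) ℝ) k *
        dblock N l part hmono hlast (γ.map (Int.cast : ℤ → ℝ)) k := by
    intro k
    rw [heq]
    exact dblock_mul hlast h0 hpBUT hγBUT k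
  have hδ := fun k => partA hmono hlast h0 γ hγ k
  choose δ hδdet hδmap using hδ
  have hdet1 : ∀ k : Fin l, (dblock N l part hmono hlast (γ.map (Int.cast : ℤ → ℝ)) k).det = 1 := by
    intro k
    rw [← hδmap k]
    have := (Int.castRingHom ℝ).map_det (δ k)
    simp only [Int.coe_castRingHom, RingHom.mapMatrix_apply] at this
    rw [← this, hδdet k, Int.cast_one]
  have hdets : ∀ k : Fin l,
      (dblock N l part hmono hlast (q : Matrix (Fin N) (Fin N) ℝ) k).det =
        (dblock N l part hmono hlast (p : Matrix (Fin N) (Fin N) ℝ) k).det := by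
    intro k
    rw [hdb k, Matrix.det_mul, hdet1 k, mul_one]
  have hcomp2 : ∀ k : Fin l,
      (QuotientGroup.mk (nblock N l part hmono hlast q k) :
        Matrix.SpecialLinearGroup (Fin (part k.succ - part k.castSucc)) ℝ ⧸
          SLZ (part k.succ - part k.castSucc)) =
      QuotientGroup.mk (nblock N l part hmono hlast p k) := by
    intro k
    have hS : nblock N l part hmono hlast q k =
        nblock N l part hmono hlast p k *
          (Matrix.SpecialLinearGroup.map (Int.castRingHom ℝ) ⟨δ k, hδdet k⟩) := by
      apply Subtype.ext
      rw [Matrix.SpecialLinearGroup.coe_mul]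
      have hmapcoe : ((Matrix.SpecialLinearGroup.map (Int.castRingHom ℝ)
          (⟨δ k, hδdet k⟩ : Matrix.SpecialLinearGroup _ ℤ) :
          Matrix.SpecialLinearGroup _ ℝ) : Matrix _ _ ℝ) = (δ k).map (Int.cast : ℤ → ℝ) := rfl
      rw [hmapcoe, hδmap k]
      simp only [nblock, Matrix.SpecialLinearGroup.coe_mk]
      rw [hdets k, hdb k, Matrix.smul_mul]
    rw [hS]
    exact QuotientGroup.mk_mul_of_mem _ ⟨⟨δ k, hδdet k⟩, rfl⟩
  apply Prod.ext
  · funext k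
    apply Subtype.ext
    exact (hdets k).symm
  · funext k
    exact (hcomp2 k).symm

lemma phi_continuous (hmono : StrictMono part) (hlast : part (Fin.last l) = N) :
    Continuous (phi hmono hlast) := by
  have hdbc : ∀ k : Fin l, Continuous fun p : ↥(Pset N l part hmono hlast) =>
      dblock N l part hmono hlast (p : Matrix (Fin N) (Fin N) ℝ) k := by
    intro k
    apply continuous_matrix
    intro a b
    exact continuous_subtype_val.matrix_elem _ _
  have hdetc : ∀ k : Fin l, Continuous fun p : ↥(Pset N l part hmono hlast) =>
      (dblock N l part hmono hlast (p : Matrix (Fin N) (Fin N) ℝ) k).det :=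
    fun k => (hdbc k).matrix_det
  apply Continuous.prodMk
  · apply continuous_pi
    intro k
    exact Continuous.subtype_mk (hdetc k) _
  · apply continuous_pi
    intro k
    apply Continuous.comp continuous_quot_mk
    apply Continuous.subtype_mk
    exact Continuous.smul ((hdetc k).rpow_const fun p =>
      Or.inl (ne_of_gt (dblock_det_pos N l part hmono hlast p k))) (hdbc k)

end Par14Phi
section Par14Prop

open Matrix

lemma box_compact (N : ℕ) (B : ℝ) :
    IsCompact {A : Matrix (Fin N) (Fin N) ℝ | ∀ r c, A r c ∈ Set.Icc (-B) B} := by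
  have h1 : IsCompact (Set.univ.pi fun _ : Fin N =>
      (Set.univ.pi fun _ : Fin N => Set.Icc (-B) B)) :=
    isCompact_univ_pi fun _ => isCompact_univ_pi fun _ => isCompact_Icc
  have hcont : Continuous (Matrix.of : (Fin N → Fin N → ℝ) → Matrix (Fin N) (Fin N) ℝ) := by
    apply continuous_matrix
    intro r c
    exact (continuous_apply c).comp (continuous_apply r)
  have h2 := h1.image hcont
  have h3 : Matrix.of '' (Set.univ.pi fun _ : Fin N =>
      (Set.univ.pi fun _ : Fin N => Set.Icc (-B) B)) =
      {A : Matrix (Fin N) (Fin N) ℝ | ∀ r c, A r c ∈ Set.Icc (-B) B} := by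
    ext A
    constructor
    · rintro ⟨f, hf, rfl⟩
      intro r c
      have h4 := Set.mem_pi.1 hf r (Set.mem_univ r)
      exact Set.mem_pi.1 h4 c (Set.mem_univ c)
    · intro hA
      refine ⟨fun r c => A r c, ?_, rfl⟩
      exact Set.mem_pi.2 fun r _ => Set.mem_pi.2 fun c _ => hA r c
  rw [← h3]
  exact h2

lemma sumabs_bound {n : ℕ} {D : Set (Matrix (Fin n) (Fin n) ℝ)} (hD : IsCompact D) :
    ∃ M : ℝ, 0 ≤ M ∧ ∀ X ∈ D, (∑ a, ∑ b, |X a b|) ≤ M := by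
  have hcont : Continuous fun X : Matrix (Fin n) (Fin n) ℝ => ∑ a, ∑ b, |X a b| := by
    apply continuous_finset_sum
    intro a _
    apply continuous_finset_sum
    intro b _
    exact (continuous_id.matrix_elem a b).abs
  obtain ⟨M', hM'⟩ := (hD.image hcont).bddAbove
  exact ⟨max M' 0, le_max_right _ _, fun X hX =>
    le_trans (hM' (Set.mem_image_of_mem _ hX)) (le_max_left _ _)⟩

lemma entry_le_sumabs {n m : ℕ} (X : Matrix (Fin n) (Fin m) ℝ) (a : Fin n) (b : Fin m) :
    |X a b| ≤ ∑ a', ∑ b', |X a' b'| :=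
  calc |X a b| ≤ ∑ b', |X a b'| :=
      Finset.single_le_sum (f := fun b' => |X a b'|) (fun _ _ => abs_nonneg _)
        (Finset.mem_univ b)
    _ ≤ ∑ a', ∑ b', |X a' b'| :=
      Finset.single_le_sum (f := fun a' => ∑ b', |X a' b'|)
        (fun _ _ => Finset.sum_nonneg fun _ _ => abs_nonneg _) (Finset.mem_univ a)

lemma prod_entry_bound {n n' m : ℕ} (X : Matrix (Fin n) (Fin n') ℝ)
    (Y : Matrix (Fin n') (Fin m) ℝ) (hY : ∀ c b, |Y c b| ≤ 1 / 2) (a : Fin n) (b : Fin m)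
    (M : ℝ) (hM : ∑ a', ∑ c, |X a' c| ≤ M) : |(X * Y) a b| ≤ M / 2 := by
  calc |(X * Y) a b| = |∑ c, X a c * Y c b| := by rw [Matrix.mul_apply]
    _ ≤ ∑ c, |X a c * Y c b| := Finset.abs_sum_le_sum_abs _ _
    _ = ∑ c, |X a c| * |Y c b| := by simp [abs_mul]
    _ ≤ ∑ c, |X a c| * (1 / 2) :=
      Finset.sum_le_sum fun c _ => mul_le_mul_of_nonneg_left (hY c b) (abs_nonneg _)
    _ = (∑ c, |X a c|) * (1 / 2) := (Finset.sum_mul _ _ _).symm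
    _ ≤ M * (1 / 2) := by
        apply mul_le_mul_of_nonneg_right _ (by norm_num)
        calc ∑ c, |X a c| ≤ ∑ a', ∑ c, |X a' c| :=
            Finset.single_le_sum (f := fun a' => ∑ c, |X a' c|)
              (fun _ _ => Finset.sum_nonneg fun _ _ => abs_nonneg _) (Finset.mem_univ a)
          _ ≤ M := hM
    _ = M / 2 := by ring

lemma cast_one_block {n : ℕ} :
    ((1 : Matrix (Fin n) (Fin n) ℤ)).map (Int.cast : ℤ → ℝ) = 1 := by
  ext a b
  by_cases h : a = b <;> simp [Matrix.one_apply, h]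

lemma sum_Icc_split {l : ℕ} {M : Type*} [AddCommMonoid M] {k m : Fin l} (h : k < m)
    (f : Fin l → M) :
    ∑ t ∈ Finset.Icc k m, f t = f m + (f k + ∑ t ∈ Finset.Ioo k m, f t) := by
  have hm : m ∈ Finset.Icc k m := Finset.mem_Icc.2 ⟨le_of_lt h, le_refl m⟩
  rw [← Finset.add_sum_erase _ f hm, Finset.Icc_erase_right]
  have hk : k ∈ Finset.Ico k m := Finset.mem_Ico.2 ⟨le_refl k, h⟩
  rw [← Finset.add_sum_erase _ f hk, Finset.Ico_erase_left]

lemma rpow_smul_det {n : ℕ} (hn : 0 < n) {t : ℝ} (ht : 0 < t)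
    (A : Matrix (Fin n) (Fin n) ℝ) (hA : A.det = 1) :
    (t ^ ((1 : ℝ) / (n : ℝ)) • A).det = t := by
  have hn' : ((n : ℕ) : ℝ) ≠ 0 := Nat.cast_ne_zero.mpr hn.ne'
  rw [Matrix.det_smul, Fintype.card_fin, hA, mul_one,
    ← Real.rpow_natCast (t ^ ((1 : ℝ) / (n : ℝ))) n, ← Real.rpow_mul ht.le]
  rw [show (1 : ℝ) / (n : ℝ) * (n : ℝ) = 1 by field_simp, Real.rpow_one]

end Par14Prop
section Par14Red

open Matrix

variable {N l : ℕ} {part : Fin (l + 1) → ℕ}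

lemma unipotent_reduction (hmono : StrictMono part) (hlast : part (Fin.last l) = N)
    (h0 : part 0 = 0) {p1 : Matrix (Fin N) (Fin N) ℝ}
    (hp1 : p1 ∈ Pset N l part hmono hlast) :
    ∃ γ : Matrix (Fin N) (Fin N) ℤ,
      γ.map (Int.cast : ℤ → ℝ) ∈ Pset N l part hmono hlast ∧
      (∀ k, dblock N l part hmono hlast (p1 * γ.map (Int.cast : ℤ → ℝ)) k =
        dblock N l part hmono hlast p1 k) ∧
      (∀ (k m : Fin l) (a : Fin (part k.succ - part k.castSucc))
          (b : Fin (part m.succ - part m.castSucc)), k < m →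
        |oblock hmono hlast (p1 * γ.map (Int.cast : ℤ → ℝ)) k m a b| ≤
          (∑ a', ∑ b', |dblock N l part hmono hlast p1 k a' b'|) / 2) := by
  classical
  set Pf : ∀ k m : Fin l, Matrix (Fin (part k.succ - part k.castSucc))
      (Fin (part m.succ - part m.castSucc)) ℝ :=
    fun k m => oblock hmono hlast p1 k m with hPfdef
  have hPfd : ∀ k, Pf k k = dblock N l part hmono hlast p1 k := fun k => rfl
  have hdet0 : ∀ k, IsUnit (Pf k k).det := by
    intro k
    rw [hPfd k]
    exact isUnit_iff_ne_zero.2 (ne_of_gt (hp1.2.2 k))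
  set G1 : ∀ k m : Fin l, Matrix (Fin (part k.succ - part k.castSucc))
      (Fin (part m.succ - part m.castSucc)) ℤ :=
    fun k m => if k = m then Matrix.of (fun a b => if (a : ℕ) = (b : ℕ) then 1 else 0)
      else redX Pf k m with hG1def
  set γ1 : Matrix (Fin N) (Fin N) ℤ := assemble hmono hlast h0 G1 with hγ1def
  set γ1c : Matrix (Fin N) (Fin N) ℝ := γ1.map (Int.cast : ℤ → ℝ) with hγ1cdef
  have hγ1ob : ∀ k m, oblock hmono hlast γ1c k m = (G1 k m).map (Int.cast : ℤ → ℝ) := by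
    intro k m
    rw [hγ1cdef, hγ1def, oblock_map, oblock_assemble]
  have hG1diag : ∀ k, (G1 k k).map (Int.cast : ℤ → ℝ) = 1 := by
    intro k
    rw [hG1def]
    simp only [if_pos rfl]
    ext a b
    by_cases h : a = b
    · subst h; simp [Matrix.one_apply]
    · have h' : (a : ℕ) ≠ (b : ℕ) := fun hh => h (Fin.ext hh)
      simp [Matrix.one_apply, h, h']
  have hG1low : ∀ k m : Fin l, m < k → G1 k m = 0 := by
    intro k m h
    rw [hG1def]
    simp only [if_neg (ne_of_gt h)]
    exact redX_zero Pf (by omega)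
  have hγ1db : ∀ k, dblock N l part hmono hlast γ1c k = 1 := by
    intro k
    rw [← oblock_diag, hγ1ob, hG1diag]
  have hγ1BUT : IsBUT N l part γ1c := by
    apply isBUT_of_lower_zero hlast h0 (hmono := hmono)
    intro r c h
    rw [entry_eq_oblock hmono hlast h0 γ1c r c, hγ1ob,
      hG1low _ _ h]
    simp
  have hγ1P : γ1c ∈ Pset N l part hmono hlast := by
    refine ⟨?_, hγ1BUT, fun k => by rw [hγ1db k]; simp⟩
    rw [det_eq_prod_dblock (hmono := hmono) hlast h0 hγ1BUT]
    simp [hγ1db]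
  refine ⟨γ1, hγ1P, ?_, ?_⟩
  · intro k
    rw [← hγ1cdef, dblock_mul hlast h0 hp1.2.1 hγ1BUT, hγ1db, Matrix.mul_one]
  · intro k m a b hkm
    rw [← hγ1cdef]
    have hobq : oblock hmono hlast (p1 * γ1c) k m =
        Pf k k * (((redX Pf k m).map (Int.cast : ℤ → ℝ)) +
          (Pf k k)⁻¹ * (Pf k m + ∑ t ∈ Finset.Ioo k m,
            Pf k t * (redX Pf t m).map (Int.cast : ℤ → ℝ))) := by
      rw [oblock_mul hlast h0 hp1.2.1 hγ1BUT, sum_Icc_split hkm]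
      have ht1 : oblock hmono hlast γ1c m m = 1 := by rw [hγ1ob, hG1diag]
      have ht2 : ∀ t : Fin l, t < m →
          oblock hmono hlast γ1c t m = (redX Pf t m).map (Int.cast : ℤ → ℝ) := by
        intro t h2
        rw [hγ1ob, hG1def]
        simp only [if_neg (ne_of_lt h2)]
      have hsc : ∀ t ∈ Finset.Ioo k m,
          oblock hmono hlast p1 k t * oblock hmono hlast γ1c t m =
            Pf k t * (redX Pf t m).map (Int.cast : ℤ → ℝ) := by
        intro t ht
        rw [ht2 t (Finset.mem_Ioo.1 ht).2]
      rw [ht1, ht2 k hkm, Finset.sum_congr rfl hsc]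
      have hid : oblock hmono hlast p1 k m = Pf k m := rfl
      have hid2 : oblock hmono hlast p1 k k = Pf k k := rfl
      rw [hid, hid2, Matrix.mul_one, Matrix.mul_add, ← Matrix.mul_assoc,
        Matrix.mul_nonsing_inv _ (hdet0 k), Matrix.one_mul]
      try abel
    rw [hobq]
    have hF : ∀ (c : Fin (part k.succ - part k.castSucc))
        (b : Fin (part m.succ - part m.castSucc)),
        |(((redX Pf k m).map (Int.cast : ℤ → ℝ)) +
          (Pf k k)⁻¹ * (Pf k m + ∑ t ∈ Finset.Ioo k m,
            Pf k t * (redX Pf t m).map (Int.cast : ℤ → ℝ))) c b| ≤ 1 / 2 := by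
      intro c b
      rw [redX_eq Pf hkm]
      simp only [Matrix.add_apply, Matrix.map_apply, Matrix.of_apply, Int.cast_neg]
      rw [neg_add_eq_sub]
      exact abs_sub_round _
    have := prod_entry_bound (Pf k k) _ hF a b
      (∑ a', ∑ b', |(Pf k k) a' b'|) (le_refl _)
    rw [hPfd k] at this
    exact this

end Par14Red
section Par14Main

open Matrix

variable {N l : ℕ} {part : Fin (l + 1) → ℕ}

lemma phi_proper (hmono : StrictMono part) (hlast : part (Fin.last l) = N) (h0 : part 0 = 0)
    {Φ : PQuot N l part hmono hlast → ParabolicTarget l part} (hcont : Continuous Φ)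
    (hval : ∀ p : ↥(Pset N l part hmono hlast), Φ (Quot.mk _ p) = phi hmono hlast p)
    {K : Set (ParabolicTarget l part)} (hK : IsCompact K) : IsCompact (Φ ⁻¹' K) := by
  classical
  set K1 : Fin l → Set ℝ :=
    fun k => (fun y : ParabolicTarget l part => ((y.1 k : ℝ))) '' K with hK1def
  have hK1c : ∀ k, IsCompact (K1 k) := fun k =>
    hK.image (continuous_subtype_val.comp ((continuous_apply k).comp continuous_fst))
  have hK1pos : ∀ k, ∀ t ∈ K1 k, 0 < t := by
    rintro k t ⟨y, hy, rfl⟩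
    exact (y.1 k).2
  have hK2c : ∀ k, IsCompact ((fun y : ParabolicTarget l part => y.2 k) '' K) := fun k =>
    hK.image ((continuous_apply k).comp continuous_snd)
  have hL : ∀ k : Fin l,
      ∃ L : Set (Matrix.SpecialLinearGroup (Fin (part k.succ - part k.castSucc)) ℝ),
        IsCompact L ∧ (fun y : ParabolicTarget l part => y.2 k) '' K ⊆
          QuotientGroup.mk '' L :=
    fun k => exists_compact_lift _ (hK2c k)
  choose L hLc hLsub using hL
  set D : ∀ k : Fin l, Set (Matrix (Fin (part k.succ - part k.castSucc))
      (Fin (part k.succ - part k.castSucc)) ℝ) :=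
    fun k => (fun td : ℝ × Matrix.SpecialLinearGroup (Fin (part k.succ - part k.castSucc)) ℝ =>
      td.1 ^ ((1 : ℝ) / ((part k.succ - part k.castSucc : ℕ) : ℝ)) •
        (td.2 : Matrix (Fin (part k.succ - part k.castSucc))
          (Fin (part k.succ - part k.castSucc)) ℝ)) '' ((K1 k) ×ˢ (L k)) with hDdef
  have hDc : ∀ k, IsCompact (D k) := by
    intro k
    apply ((hK1c k).prod (hLc k)).image_of_continuousOn
    apply ContinuousOn.fun_smul
    · apply ContinuousOn.rpow_const continuous_fst.continuousOn
      rintro ⟨t, A⟩ htA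
      exact Or.inl (ne_of_gt (hK1pos k t htA.1))
    · exact (continuous_subtype_val.comp continuous_snd).continuousOn
  have hDdet : ∀ k, ∀ X ∈ D k, 0 < X.det := by
    rintro k X ⟨⟨t, A⟩, ⟨ht, hA⟩, rfl⟩
    have hd := rpow_smul_det (jpos hmono k) (hK1pos k t ht)
      (A : Matrix (Fin (part k.succ - part k.castSucc))
        (Fin (part k.succ - part k.castSucc)) ℝ) A.2
    simp only
    rw [hd]
    exact hK1pos k t ht
  have hM : ∀ k, ∃ M : ℝ, 0 ≤ M ∧ ∀ X ∈ D k, (∑ a, ∑ b, |X a b|) ≤ M :=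
    fun k => sumabs_bound (hDc k)
  choose M hM0 hMb using hM
  set B : ℝ := ∑ k, M k with hBdef
  have hMB : ∀ k, M k ≤ B :=
    fun k => Finset.single_le_sum (f := M) (fun i _ => hM0 i) (Finset.mem_univ k)
  have hB0 : 0 ≤ B := Finset.sum_nonneg fun i _ => hM0 i
  set C0 : Set (Matrix (Fin N) (Fin N) ℝ) := {A | A.det = 1 ∧ IsBUT N l part A ∧
    (∀ k, dblock N l part hmono hlast A k ∈ D k) ∧ ∀ r c, |A r c| ≤ B} with hC0def
  have hC0P : C0 ⊆ Pset N l part hmono hlast := by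
    rintro A ⟨h1, h2, h3, _⟩
    exact ⟨h1, h2, fun k => hDdet k _ (h3 k)⟩
  have hC0closed : IsClosed C0 := by
    have e : C0 = {A : Matrix (Fin N) (Fin N) ℝ | A.det = 1} ∩
        ({A | IsBUT N l part A} ∩
          ({A | ∀ k, dblock N l part hmono hlast A k ∈ D k} ∩
            {A | ∀ r c, |A r c| ≤ B})) := rfl
    rw [e]
    refine IsClosed.inter ?_ (IsClosed.inter ?_ (IsClosed.inter ?_ ?_))
    · exact isClosed_eq continuous_id.matrix_det continuous_const
    · have e2 : {A : Matrix (Fin N) (Fin N) ℝ | IsBUT N l part A} =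
          ⋂ (k : Fin (l + 1)) (r : Fin N) (c : Fin N),
            {A : Matrix (Fin N) (Fin N) ℝ |
              part k ≤ (r : ℕ) → (c : ℕ) < part k → A r c = 0} := by
        ext A
        simp only [Set.mem_setOf_eq, Set.mem_iInter, IsBUT]
      rw [e2]
      refine isClosed_iInter fun k => isClosed_iInter fun r => isClosed_iInter fun c => ?_
      by_cases h1 : part k ≤ (r : ℕ)
      · by_cases h2 : (c : ℕ) < part k
        · have e3 : {A : Matrix (Fin N) (Fin N) ℝ |
              part k ≤ (r : ℕ) → (c : ℕ) < part k → A r c = 0} =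
              {A : Matrix (Fin N) (Fin N) ℝ | A r c = 0} := by
            ext A; simp [h1, h2]
          rw [e3]
          exact isClosed_eq (continuous_id.matrix_elem r c) continuous_const
        · have e3 : {A : Matrix (Fin N) (Fin N) ℝ |
              part k ≤ (r : ℕ) → (c : ℕ) < part k → A r c = 0} = Set.univ := by
            ext A; simp [h2]
          rw [e3]; exact isClosed_univ
      · have e3 : {A : Matrix (Fin N) (Fin N) ℝ |
            part k ≤ (r : ℕ) → (c : ℕ) < part k → A r c = 0} = Set.univ := by
          ext A; simp [h1]
        rw [e3]; exact isClosed_univ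
    · have e4 : {A : Matrix (Fin N) (Fin N) ℝ | ∀ k, dblock N l part hmono hlast A k ∈ D k} =
          ⋂ k : Fin l, (fun A => dblock N l part hmono hlast A k) ⁻¹' (D k) := by
        ext A; simp [Set.mem_iInter]
      rw [e4]
      refine isClosed_iInter fun k => IsClosed.preimage ?_ (hDc k).isClosed
      exact continuous_matrix fun a b => continuous_id.matrix_elem _ _
    · have e5 : {A : Matrix (Fin N) (Fin N) ℝ | ∀ r c, |A r c| ≤ B} =
          ⋂ (r : Fin N) (c : Fin N), {A : Matrix (Fin N) (Fin N) ℝ | |A r c| ≤ B} := by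
        ext A; simp [Set.mem_iInter]
      rw [e5]
      refine isClosed_iInter fun r => isClosed_iInter fun c => ?_
      exact isClosed_le (continuous_id.matrix_elem r c).abs continuous_const
  have hC0cpt : IsCompact C0 :=
    IsCompact.of_isClosed_subset (box_compact N B) hC0closed
      (fun A hA r c => Set.mem_Icc.2 (abs_le.1 (hA.2.2.2 r c)))
  set C : Set ↥(Pset N l part hmono hlast) := Subtype.val ⁻¹' C0 with hCdef
  have hCc : IsCompact C := by
    rw [Topology.IsInducing.subtypeVal.isCompact_iff]
    have himg : Subtype.val '' C = C0 := by
      rw [hCdef, Subtype.image_preimage_coe]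
      exact Set.inter_eq_self_of_subset_right hC0P
    rw [himg]
    exact hC0cpt
  have hsub : Φ ⁻¹' K ⊆ Quot.mk _ '' C := by
    intro x hx
    obtain ⟨p, rfl⟩ := Quot.exists_rep x
    rw [Set.mem_preimage, hval p] at hx
    have hdets : ∀ k, (dblock N l part hmono hlast (p : Matrix (Fin N) (Fin N) ℝ) k).det ∈ K1 k :=
      fun k => ⟨phi hmono hlast p, hx, rfl⟩
    have hAz : ∀ k : Fin l, ∃ A ∈ L k,
        ∃ z : Matrix.SpecialLinearGroup (Fin (part k.succ - part k.castSucc)) ℤ,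
          nblock N l part hmono hlast p k *
            Matrix.SpecialLinearGroup.map (Int.castRingHom ℝ) z = A := by
      intro k
      have h1 : (phi hmono hlast p).2 k ∈ QuotientGroup.mk '' L k :=
        hLsub k ⟨phi hmono hlast p, hx, rfl⟩
      obtain ⟨A, hALmem, hAeq⟩ := h1
      have h2' : (QuotientGroup.mk (nblock N l part hmono hlast p k) :
          Matrix.SpecialLinearGroup (Fin (part k.succ - part k.castSucc)) ℝ ⧸
            SLZ (part k.succ - part k.castSucc)) = QuotientGroup.mk A := hAeq.symm
      have h2 : (nblock N l part hmono hlast p k)⁻¹ * A ∈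
          SLZ (part k.succ - part k.castSucc) := QuotientGroup.eq.1 h2'
      rw [SLZ, MonoidHom.mem_range] at h2
      obtain ⟨z, hzeq⟩ := h2
      refine ⟨A, hALmem, z, ?_⟩
      rw [hzeq, mul_inv_cancel_left]
    choose A hAL z hz using hAz
    set G0 : ∀ k m : Fin l, Matrix (Fin (part k.succ - part k.castSucc))
        (Fin (part m.succ - part m.castSucc)) ℤ :=
      fun k m => if h : k = m then
        Matrix.of (fun a b => ((z k) : Matrix (Fin (part k.succ - part k.castSucc))
          (Fin (part k.succ - part k.castSucc)) ℤ) a ⟨(b : ℕ), by rw [h]; exact b.isLt⟩)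
        else 0 with hG0def
    have hG0diag : ∀ k, G0 k k = ((z k) : Matrix (Fin (part k.succ - part k.castSucc))
        (Fin (part k.succ - part k.castSucc)) ℤ) := by
      intro k
      ext a b
      rw [hG0def]
      simp
    set γ0 : Matrix (Fin N) (Fin N) ℤ := assemble hmono hlast h0 G0 with hγ0def
    set γ0c : Matrix (Fin N) (Fin N) ℝ := γ0.map (Int.cast : ℤ → ℝ) with hγ0cdef
    have hγ0ob : ∀ k m, oblock hmono hlast γ0c k m = (G0 k m).map (Int.cast : ℤ → ℝ) := by
      intro k m
      rw [hγ0cdef, hγ0def, oblock_map, oblock_assemble]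
    have hγ0db : ∀ k, dblock N l part hmono hlast γ0c k =
        ((z k) : Matrix (Fin (part k.succ - part k.castSucc))
          (Fin (part k.succ - part k.castSucc)) ℤ).map (Int.cast : ℤ → ℝ) := by
      intro k
      rw [← oblock_diag, hγ0ob, hG0diag]
    have hγ0dbdet : ∀ k, (dblock N l part hmono hlast γ0c k).det = 1 := by
      intro k
      rw [hγ0db k]
      have hmd := (Int.castRingHom ℝ).map_det ((z k) : Matrix (Fin (part k.succ - part k.castSucc))
        (Fin (part k.succ - part k.castSucc)) ℤ)
      simp only [Int.coe_castRingHom, RingHom.mapMatrix_apply] at hmd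
      rw [← hmd, (z k).2, Int.cast_one]
    have hγ0BUT : IsBUT N l part γ0c := by
      apply isBUT_of_lower_zero hlast h0 (hmono := hmono)
      intro r c h
      rw [entry_eq_oblock hmono hlast h0 γ0c r c, hγ0ob]
      have hz0 : G0 (bIdx hlast h0 r) (bIdx hlast h0 c) = 0 := by
        rw [hG0def]
        exact dif_neg (ne_of_gt h)
      rw [hz0]
      simp
    have hγ0P : γ0c ∈ Pset N l part hmono hlast := by
      refine ⟨?_, hγ0BUT, fun k => by rw [hγ0dbdet k]; norm_num⟩
      rw [det_eq_prod_dblock (hmono := hmono) hlast h0 hγ0BUT]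
      simp [hγ0dbdet]
    set p1 : Matrix (Fin N) (Fin N) ℝ := (p : Matrix (Fin N) (Fin N) ℝ) * γ0c with hp1def
    have hp1P : p1 ∈ Pset N l part hmono hlast := Pset_mul hmono hlast h0 p.2 hγ0P
    have hp1db : ∀ k, dblock N l part hmono hlast p1 k =
        dblock N l part hmono hlast (p : Matrix (Fin N) (Fin N) ℝ) k *
          ((z k) : Matrix (Fin (part k.succ - part k.castSucc))
            (Fin (part k.succ - part k.castSucc)) ℤ).map (Int.cast : ℤ → ℝ) := by
      intro k
      rw [hp1def, dblock_mul hlast h0 p.2.2.1 hγ0BUT, hγ0db]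
    have hDmem : ∀ k, dblock N l part hmono hlast p1 k ∈ D k := by
      intro k
      have hpos := dblock_det_pos N l part hmono hlast p k
      have hAcoe : ((A k) : Matrix (Fin (part k.succ - part k.castSucc))
          (Fin (part k.succ - part k.castSucc)) ℝ) =
          ((dblock N l part hmono hlast (p : Matrix (Fin N) (Fin N) ℝ) k).det ^
            (-(1:ℝ)/((part k.succ - part k.castSucc : ℕ) : ℝ))) •
            dblock N l part hmono hlast p1 k := by
        rw [← hz k, Matrix.SpecialLinearGroup.coe_mul]
        have h1 : ((nblock N l part hmono hlast p k) : Matrix (Fin (part k.succ - part k.castSucc))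
            (Fin (part k.succ - part k.castSucc)) ℝ) =
            ((dblock N l part hmono hlast (p : Matrix (Fin N) (Fin N) ℝ) k).det ^
              (-(1:ℝ)/((part k.succ - part k.castSucc : ℕ) : ℝ))) •
              dblock N l part hmono hlast (p : Matrix (Fin N) (Fin N) ℝ) k := rfl
        have h2 : ((Matrix.SpecialLinearGroup.map (Int.castRingHom ℝ) (z k)) :
            Matrix (Fin (part k.succ - part k.castSucc))
              (Fin (part k.succ - part k.castSucc)) ℝ) =
            ((z k) : Matrix (Fin (part k.succ - part k.castSucc))
              (Fin (part k.succ - part k.castSucc)) ℤ).map (Int.cast : ℤ → ℝ) := rfl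
        rw [h1, h2, Matrix.smul_mul, hp1db k]
      refine ⟨((dblock N l part hmono hlast (p : Matrix (Fin N) (Fin N) ℝ) k).det, A k),
        ⟨hdets k, hAL k⟩, ?_⟩
      simp only
      rw [hAcoe, smul_smul, ← Real.rpow_add hpos]
      rw [show (1:ℝ)/((part k.succ - part k.castSucc : ℕ) : ℝ) +
        (-(1:ℝ)/((part k.succ - part k.castSucc : ℕ) : ℝ)) = 0 by ring]
      rw [Real.rpow_zero, one_smul]
    obtain ⟨γ1, hγ1P, hγ1db, hγ1bound⟩ := unipotent_reduction hmono hlast h0 hp1P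
    set q : Matrix (Fin N) (Fin N) ℝ := p1 * γ1.map (Int.cast : ℤ → ℝ) with hqdef
    have hqP : q ∈ Pset N l part hmono hlast := Pset_mul hmono hlast h0 hp1P hγ1P
    have hqdb : ∀ k, dblock N l part hmono hlast q k = dblock N l part hmono hlast p1 k := hγ1db
    have hob_bound : ∀ (k m : Fin l) (a : Fin (part k.succ - part k.castSucc))
        (b : Fin (part m.succ - part m.castSucc)), |oblock hmono hlast q k m a b| ≤ B := by
      intro k m a b
      rcases lt_trichotomy k m with h | h | h
      · have h1 := hγ1bound k m a b h
        have h2 : (∑ a', ∑ b', |dblock N l part hmono hlast p1 k a' b'|) ≤ M k :=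
          hMb k _ (hDmem k)
        have h3 := hMB k
        have h4 := hM0 k
        calc |oblock hmono hlast q k m a b|
            ≤ (∑ a', ∑ b', |dblock N l part hmono hlast p1 k a' b'|) / 2 := h1
          _ ≤ B := by linarith
      · subst h
        have heq : oblock hmono hlast q k k a b = dblock N l part hmono hlast q k a b := rfl
        rw [heq]
        calc |dblock N l part hmono hlast q k a b|
            ≤ ∑ a', ∑ b', |dblock N l part hmono hlast q k a' b'| :=
              entry_le_sumabs _ a b
          _ ≤ M k := by rw [hqdb k]; exact hMb k _ (hDmem k)
          _ ≤ B := hMB k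
      · have hzero : oblock hmono hlast q k m a b = 0 := by
          have hq0 : q (blockEmb N l part hmono hlast k a)
              (blockEmb N l part hmono hlast m b) = 0 := by
            apply hqP.2.1.lower_zero hmono hlast h0
            rw [bIdx_blockEmb hmono hlast h0, bIdx_blockEmb hmono hlast h0]
            exact h
          exact hq0
        rw [hzero]
        simpa using hB0
    have hqC0 : q ∈ C0 := by
      refine ⟨hqP.1, hqP.2.1, fun k => by rw [hqdb k]; exact hDmem k, ?_⟩
      intro r c
      rw [entry_eq_oblock hmono hlast h0 q r c]
      exact hob_bound _ _ _ _
    have hcast : (γ0 * γ1).map (Int.cast : ℤ → ℝ) = γ0c * γ1.map (Int.cast : ℤ → ℝ) := by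
      have hmm := Matrix.map_mul (L := γ0) (M := γ1) (f := Int.castRingHom ℝ)
      simpa [Int.coe_castRingHom] using hmm
    refine ⟨⟨q, hC0P hqC0⟩, hqC0, ?_⟩
    apply Eq.symm
    apply Quot.sound
    refine ⟨γ0 * γ1, ?_, ?_⟩
    · rw [hcast]
      exact Pset_mul hmono hlast h0 hγ0P hγ1P
    · show q = (p : Matrix (Fin N) (Fin N) ℝ) * (γ0 * γ1).map (Int.cast : ℤ → ℝ)
      rw [hcast, hqdef, hp1def, Matrix.mul_assoc]
  exact IsCompact.of_isClosed_subset (hCc.image continuous_quot_mk)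
    ((hK.isClosed).preimage hcont) hsub

end Par14Main
/-- (a) For `γ ∈ Γ_P = P ∩ SL_N(ℤ)`, each diagonal block `γ_k` lies in `SL_{j_k}(ℤ)`;
(b) the map `p ↦ ((det p_k)_k, ((det p_k)^{-1/j_k}·p_k · SL_{j_k}(ℤ))_k)` descends to a
well-defined map `Φ` on `P/Γ_P` which is continuous and proper. -/
theorem statement14 (N l : ℕ) (hl : 1 ≤ l) (part : Fin (l + 1) → ℕ)
    (h0 : part 0 = 0) (hmono : StrictMono part) (hlast : part (Fin.last l) = N) :
    (∀ γ : Matrix (Fin N) (Fin N) ℤ,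
      γ.map (Int.cast : ℤ → ℝ) ∈ Pset N l part hmono hlast →
      ∀ k : Fin l,
        ∃ δ : Matrix (Fin (part k.succ - part k.castSucc))
            (Fin (part k.succ - part k.castSucc)) ℤ,
          δ.det = 1 ∧
          δ.map (Int.cast : ℤ → ℝ) =
            dblock N l part hmono hlast (γ.map (Int.cast : ℤ → ℝ)) k) ∧
    ∃ Φ : PQuot N l part hmono hlast → ParabolicTarget l part,
      (∀ p : ↥(Pset N l part hmono hlast),
        Φ (Quot.mk _ p) =
          (fun k => ⟨(dblock N l part hmono hlast (p : Matrix (Fin N) (Fin N) ℝ) k).det,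
              dblock_det_pos N l part hmono hlast p k⟩,
           fun k => QuotientGroup.mk (nblock N l part hmono hlast p k))) ∧
      Continuous Φ ∧
      (∀ K : Set (ParabolicTarget l part), IsCompact K → IsCompact (Φ ⁻¹' K)) := by
  constructor
  · exact fun γ hγ k => partA hmono hlast h0 γ hγ k
  · refine ⟨Quot.lift (phi hmono hlast) (phi_invariant hmono hlast h0), fun p => rfl, ?_, ?_⟩
    · exact continuous_quot_lift _ (phi_continuous hmono hlast)
    · intro K hK
      exact phi_proper hmono hlast h0
        (continuous_quot_lift _ (phi_continuous hmono hlast)) (fun p => rfl) hK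

end
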